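/- In the approximate-diameter lower-bound graph G_{x,y}, for all nodes u, v ∈ A ∪ B ∪ {c̄_A, c̄_B}, if there is no index i ∈ {0,…,k−1} with {u,v} = {a^i, b^i}, then dist(u,v) ≤ 2q + 1. -/
import Mathlib


/-- The "backbone" vertices of the approximate-diameter lower-bound graph:
the original vertices `a i`, `ā i`, `fA h`, `tA h`, `cA`, `cA'` (= c̄_A) on
Alice's side, and `b i`, `b̄ i`, `fB h`, `tB h`, `cB`, `cB'` (= c̄_B) on Bob's side. -/
inductive ADBase (k logk : ℕ) where
  | a (i : Fin k)
  | abar (i : Fin k)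
  | fA (h : Fin logk)
  | tA (h : Fin logk)
  | cA
  | cA'
  | b (i : Fin k)
  | bbar (i : Fin k)
  | fB (h : Fin logk)
  | tB (h : Fin logk)
  | cB
  | cB'
deriving DecidableEq

/-- The fixed one-side edges that get subdivided into paths of `q` edges
(described here for Alice's side; Bob's side is symmetric):
`aBit i h` is the edge joining `a i` to its `h`-th bit-node (`fA h` if bit `h`
of `i` is `0`, else `tA h`); `aC i` joins `a i` to `cA`; `fC h` joins `fA h`
to `cA'`; `tC h` joins `tA h` to `cA'`; `cc` joins `cA` to `cA'`;
`bar i` is the path joining `a i` to `ā i`. -/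
inductive SideEdge (k logk : ℕ) where
  | aBit (i : Fin k) (h : Fin logk)
  | aC (i : Fin k)
  | fC (h : Fin logk)
  | tC (h : Fin logk)
  | cc
  | bar (i : Fin k)
deriving DecidableEq

/-- Vertices of the approximate-diameter lower-bound graph: the backbone vertices
together with the `q - 1` internal vertices of each subdivided edge on each side. -/
inductive ADVertex (k logk q : ℕ) where
  | base (v : ADBase k logk)
  | pA (e : SideEdge k logk) (t : Fin (q - 1))
  | pB (e : SideEdge k logk) (t : Fin (q - 1))
deriving DecidableEq

/-- Source endpoint of a subdivided edge on Alice's side. -/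
def srcA (k logk : ℕ) : SideEdge k logk → ADBase k logk
  | .aBit i _ => .a i
  | .aC i => .a i
  | .fC h => .fA h
  | .tC h => .tA h
  | .cc => .cA
  | .bar i => .a i

/-- Target endpoint of a subdivided edge on Alice's side. -/
def tgtA (k logk : ℕ) : SideEdge k logk → ADBase k logk
  | .aBit i h => if i.val.testBit h.val then .tA h else .fA h
  | .aC _ => .cA
  | .fC _ => .cA'
  | .tC _ => .cA'
  | .cc => .cA'
  | .bar i => .abar i

/-- Source endpoint of a subdivided edge on Bob's side. -/
def srcB (k logk : ℕ) : SideEdge k logk → ADBase k logk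
  | .aBit i _ => .b i
  | .aC i => .b i
  | .fC h => .fB h
  | .tC h => .tB h
  | .cc => .cB
  | .bar i => .b i

/-- Target endpoint of a subdivided edge on Bob's side. -/
def tgtB (k logk : ℕ) : SideEdge k logk → ADBase k logk
  | .aBit i h => if i.val.testBit h.val then .tB h else .fB h
  | .aC _ => .cB
  | .fC _ => .cB'
  | .tC _ => .cB'
  | .cc => .cB'
  | .bar i => .bbar i

/-- `pathAdj q src tgt node u v` says that `(u, v)` is (an orientation of) one of
the `q` consecutive edges of the path from `src` to `tgt` whose `q - 1` internal
vertices are `node 0, …, node (q-2)` (for `q = 1` the path is the single edge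
`(src, tgt)`). -/
def pathAdj (q : ℕ) {α : Type*} (src tgt : α) (node : Fin (q - 1) → α) (u v : α) : Prop :=
  (q = 1 ∧ u = src ∧ v = tgt) ∨
  (∃ h0 : 0 < q - 1, u = src ∧ v = node ⟨0, h0⟩) ∨
  (∃ t : Fin (q - 1), ∃ ht : t.val + 1 < q - 1, u = node t ∧ v = node ⟨t.val + 1, ht⟩) ∨
  (∃ h0 : 0 < q - 1, u = node ⟨q - 2, by omega⟩ ∧ v = tgt)

/-- Base relation generating the edges of the approximate-diameter lower-bound
graph `G_{x,y}`: the subdivided fixed edges on each side, the single cross edges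
`(fA h, tB h)`, `(tA h, fB h)` and `(cA', cB')`, and the single input edges
`(a i, cA')` present iff `x i = 0` and `(b i, cB')` present iff `y i = 0`. -/
def adRel (k logk q : ℕ) (x y : Fin k → Bool) (u v : ADVertex k logk q) : Prop :=
  (∃ e : SideEdge k logk,
    pathAdj q (ADVertex.base (srcA k logk e)) (ADVertex.base (tgtA k logk e))
      (fun t => ADVertex.pA e t) u v) ∨
  (∃ e : SideEdge k logk,
    pathAdj q (ADVertex.base (srcB k logk e)) (ADVertex.base (tgtB k logk e))
      (fun t => ADVertex.pB e t) u v) ∨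
  (∃ h : Fin logk, u = ADVertex.base (.fA h) ∧ v = ADVertex.base (.tB h)) ∨
  (∃ h : Fin logk, u = ADVertex.base (.tA h) ∧ v = ADVertex.base (.fB h)) ∨
  (u = ADVertex.base .cA' ∧ v = ADVertex.base .cB') ∨
  (∃ i : Fin k, x i = false ∧ u = ADVertex.base (.a i) ∧ v = ADVertex.base .cA') ∨
  (∃ i : Fin k, y i = false ∧ u = ADVertex.base (.b i) ∧ v = ADVertex.base .cB')

/-- The approximate-diameter lower-bound graph `G_{x,y}`. -/
def adGraph (k logk q : ℕ) (x y : Fin k → Bool) : SimpleGraph (ADVertex k logk q) :=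
  SimpleGraph.fromRel (adRel k logk q x y)

/-- `u` belongs to `A ∪ B ∪ {c̄_A, c̄_B}`. -/
def IsHub (k logk q : ℕ) (u : ADVertex k logk q) : Prop :=
  (∃ i, u = ADVertex.base (.a i)) ∨ (∃ i, u = ADVertex.base (.b i)) ∨
    u = ADVertex.base .cA' ∨ u = ADVertex.base .cB'

/-! ### Auxiliary lemmas -/

open SimpleGraph in
/-- If every `pathAdj` pair is adjacent in `G`, then `edist src tgt ≤ q`. -/
lemma pathAdj_edist_le {V : Type*} (G : SimpleGraph V) {q : ℕ} (hq : 1 ≤ q)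
    (src tgt : V) (node : Fin (q - 1) → V)
    (hadj : ∀ u v, pathAdj q src tgt node u v → G.Adj u v) :
    G.edist src tgt ≤ (q : ℕ∞) := by
  rcases Nat.lt_or_ge q 2 with h2 | h2
  · have hq1 : q = 1 := by omega
    have hA : G.Adj src tgt := hadj _ _ (Or.inl ⟨hq1, rfl, rfl⟩)
    calc G.edist src tgt = 1 := SimpleGraph.edist_eq_one_iff_adj.mpr hA
      _ ≤ (q : ℕ∞) := by exact_mod_cast Nat.one_le_cast.mpr hq
  · have key : ∀ t : ℕ, ∀ ht : t < q - 1, G.edist src (node ⟨t, ht⟩) ≤ ((t + 1 : ℕ) : ℕ∞) := by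
      intro t
      induction t with
      | zero =>
        intro ht
        have hA : G.Adj src (node ⟨0, ht⟩) := hadj _ _ (Or.inr (Or.inl ⟨ht, rfl, rfl⟩))
        simpa using (SimpleGraph.edist_eq_one_iff_adj.mpr hA).le
      | succ n ih =>
        intro ht
        have hn : n < q - 1 := by omega
        have hA : G.Adj (node ⟨n, hn⟩) (node ⟨n + 1, ht⟩) :=
          hadj _ _ (Or.inr (Or.inr (Or.inl ⟨⟨n, hn⟩, ht, rfl, rfl⟩)))
        calc G.edist src (node ⟨n + 1, ht⟩)
            ≤ G.edist src (node ⟨n, hn⟩) + G.edist (node ⟨n, hn⟩) (node ⟨n + 1, ht⟩) :=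
              SimpleGraph.edist_triangle
          _ ≤ ((n + 1 : ℕ) : ℕ∞) + 1 :=
              add_le_add (ih hn) (SimpleGraph.edist_eq_one_iff_adj.mpr hA).le
          _ = ((n + 1 + 1 : ℕ) : ℕ∞) := by push_cast; ring
    have h0 : 0 < q - 1 := by omega
    have hlast : G.Adj (node ⟨q - 2, by omega⟩) tgt :=
      hadj _ _ (Or.inr (Or.inr (Or.inr ⟨h0, rfl, rfl⟩)))
    have hmid := key (q - 2) (by omega)
    calc G.edist src tgt
        ≤ G.edist src (node ⟨q - 2, by omega⟩) + G.edist (node ⟨q - 2, by omega⟩) tgt :=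
          SimpleGraph.edist_triangle
      _ ≤ ((q - 2 + 1 : ℕ) : ℕ∞) + 1 :=
          add_le_add hmid (SimpleGraph.edist_eq_one_iff_adj.mpr hlast).le
      _ = ((q - 2 + 1 + 1 : ℕ) : ℕ∞) := by push_cast; ring
      _ = (q : ℕ∞) := by congr 1; omega

lemma adjA_of_pathAdj (k logk q : ℕ) (x y : Fin k → Bool) (e : SideEdge k logk)
    (u v : ADVertex k logk q)
    (hp : pathAdj q (ADVertex.base (srcA k logk e)) (ADVertex.base (tgtA k logk e))
      (fun t => ADVertex.pA e t) u v) :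
    (adGraph k logk q x y).Adj u v := by
  rw [adGraph, SimpleGraph.fromRel_adj]
  refine ⟨?_, Or.inl (Or.inl ⟨e, hp⟩)⟩
  rcases hp with ⟨hq1, rfl, rfl⟩ | ⟨h0, rfl, rfl⟩ | ⟨t, ht, rfl, rfl⟩ | ⟨h0, rfl, rfl⟩
  · simp only [ne_eq, ADVertex.base.injEq]
    cases e <;> simp [srcA, tgtA] <;> split <;> simp
  · simp
  · simp only [ne_eq, ADVertex.pA.injEq, not_and]
    intro _
    simp only [Fin.ext_iff]
    omega
  · simp

lemma adjB_of_pathAdj (k logk q : ℕ) (x y : Fin k → Bool) (e : SideEdge k logk)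
    (u v : ADVertex k logk q)
    (hp : pathAdj q (ADVertex.base (srcB k logk e)) (ADVertex.base (tgtB k logk e))
      (fun t => ADVertex.pB e t) u v) :
    (adGraph k logk q x y).Adj u v := by
  rw [adGraph, SimpleGraph.fromRel_adj]
  refine ⟨?_, Or.inl (Or.inr (Or.inl ⟨e, hp⟩))⟩
  rcases hp with ⟨hq1, rfl, rfl⟩ | ⟨h0, rfl, rfl⟩ | ⟨t, ht, rfl, rfl⟩ | ⟨h0, rfl, rfl⟩
  · simp only [ne_eq, ADVertex.base.injEq]
    cases e <;> simp [srcB, tgtB] <;> split <;> simp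
  · simp
  · simp only [ne_eq, ADVertex.pB.injEq, not_and]
    intro _
    simp only [Fin.ext_iff]
    omega
  · simp

lemma edistA (k logk q : ℕ) (hq : 1 ≤ q) (x y : Fin k → Bool) (e : SideEdge k logk) :
    (adGraph k logk q x y).edist (ADVertex.base (srcA k logk e))
      (ADVertex.base (tgtA k logk e)) ≤ (q : ℕ∞) :=
  pathAdj_edist_le _ hq _ _ _ (fun u v hp => adjA_of_pathAdj k logk q x y e u v hp)

lemma edistB (k logk q : ℕ) (hq : 1 ≤ q) (x y : Fin k → Bool) (e : SideEdge k logk) :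
    (adGraph k logk q x y).edist (ADVertex.base (srcB k logk e))
      (ADVertex.base (tgtB k logk e)) ≤ (q : ℕ∞) :=
  pathAdj_edist_le _ hq _ _ _ (fun u v hp => adjB_of_pathAdj k logk q x y e u v hp)

/-- `dist(a i, cA') ≤ 2q`, via the `h`-th bit node, for any bit `h`. -/
lemma edist_a_cA' (k logk q : ℕ) (hq : 1 ≤ q) (x y : Fin k → Bool)
    (i : Fin k) (hf : Fin logk) :
    (adGraph k logk q x y).edist (ADVertex.base (.a i)) (ADVertex.base .cA')
      ≤ ((2 * q : ℕ) : ℕ∞) := by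
  have h1 := edistA k logk q hq x y (.aBit i hf)
  cases hbit : i.val.testBit hf.val with
  | false =>
    have h2 := edistA k logk q hq x y (.fC hf)
    rw [srcA, tgtA, hbit] at h1
    rw [srcA, tgtA] at h2
    simp only [if_neg Bool.false_ne_true] at h1
    calc (adGraph k logk q x y).edist (ADVertex.base (.a i)) (ADVertex.base .cA')
        ≤ _ + _ := SimpleGraph.edist_triangle (v := ADVertex.base (.fA hf))
      _ ≤ (q : ℕ∞) + (q : ℕ∞) := add_le_add h1 h2
      _ = ((2 * q : ℕ) : ℕ∞) := by push_cast; ring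
  | true =>
    have h2 := edistA k logk q hq x y (.tC hf)
    rw [srcA, tgtA, hbit] at h1
    rw [srcA, tgtA] at h2
    simp only [if_pos rfl] at h1
    calc (adGraph k logk q x y).edist (ADVertex.base (.a i)) (ADVertex.base .cA')
        ≤ _ + _ := SimpleGraph.edist_triangle (v := ADVertex.base (.tA hf))
      _ ≤ (q : ℕ∞) + (q : ℕ∞) := add_le_add h1 h2
      _ = ((2 * q : ℕ) : ℕ∞) := by push_cast; ring

/-- `dist(b i, cB') ≤ 2q`, via the `h`-th bit node, for any bit `h`. -/
lemma edist_b_cB' (k logk q : ℕ) (hq : 1 ≤ q) (x y : Fin k → Bool)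
    (i : Fin k) (hf : Fin logk) :
    (adGraph k logk q x y).edist (ADVertex.base (.b i)) (ADVertex.base .cB')
      ≤ ((2 * q : ℕ) : ℕ∞) := by
  have h1 := edistB k logk q hq x y (.aBit i hf)
  cases hbit : i.val.testBit hf.val with
  | false =>
    have h2 := edistB k logk q hq x y (.fC hf)
    rw [srcB, tgtB, hbit] at h1
    rw [srcB, tgtB] at h2
    simp only [if_neg Bool.false_ne_true] at h1
    calc (adGraph k logk q x y).edist (ADVertex.base (.b i)) (ADVertex.base .cB')
        ≤ _ + _ := SimpleGraph.edist_triangle (v := ADVertex.base (.fB hf))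
      _ ≤ (q : ℕ∞) + (q : ℕ∞) := add_le_add h1 h2
      _ = ((2 * q : ℕ) : ℕ∞) := by push_cast; ring
  | true =>
    have h2 := edistB k logk q hq x y (.tC hf)
    rw [srcB, tgtB, hbit] at h1
    rw [srcB, tgtB] at h2
    simp only [if_pos rfl] at h1
    calc (adGraph k logk q x y).edist (ADVertex.base (.b i)) (ADVertex.base .cB')
        ≤ _ + _ := SimpleGraph.edist_triangle (v := ADVertex.base (.tB hf))
      _ ≤ (q : ℕ∞) + (q : ℕ∞) := add_le_add h1 h2
      _ = ((2 * q : ℕ) : ℕ∞) := by push_cast; ring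

/-- `dist(a i, a j) ≤ 2q`, via `cA`. -/
lemma edist_a_a (k logk q : ℕ) (hq : 1 ≤ q) (x y : Fin k → Bool) (i j : Fin k) :
    (adGraph k logk q x y).edist (ADVertex.base (.a i)) (ADVertex.base (.a j))
      ≤ ((2 * q : ℕ) : ℕ∞) := by
  have h1 := edistA k logk q hq x y (.aC i)
  have h2 := edistA k logk q hq x y (.aC j)
  rw [srcA, tgtA] at h1 h2
  rw [SimpleGraph.edist_comm] at h2
  calc (adGraph k logk q x y).edist (ADVertex.base (.a i)) (ADVertex.base (.a j))
      ≤ _ + _ := SimpleGraph.edist_triangle (v := ADVertex.base .cA)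
    _ ≤ (q : ℕ∞) + (q : ℕ∞) := add_le_add h1 h2
    _ = ((2 * q : ℕ) : ℕ∞) := by push_cast; ring

/-- `dist(b i, b j) ≤ 2q`, via `cB`. -/
lemma edist_b_b (k logk q : ℕ) (hq : 1 ≤ q) (x y : Fin k → Bool) (i j : Fin k) :
    (adGraph k logk q x y).edist (ADVertex.base (.b i)) (ADVertex.base (.b j))
      ≤ ((2 * q : ℕ) : ℕ∞) := by
  have h1 := edistB k logk q hq x y (.aC i)
  have h2 := edistB k logk q hq x y (.aC j)
  rw [srcB, tgtB] at h1 h2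
  rw [SimpleGraph.edist_comm] at h2
  calc (adGraph k logk q x y).edist (ADVertex.base (.b i)) (ADVertex.base (.b j))
      ≤ _ + _ := SimpleGraph.edist_triangle (v := ADVertex.base .cB)
    _ ≤ (q : ℕ∞) + (q : ℕ∞) := add_le_add h1 h2
    _ = ((2 * q : ℕ) : ℕ∞) := by push_cast; ring

lemma adj_cA'_cB' (k logk q : ℕ) (x y : Fin k → Bool) :
    (adGraph k logk q x y).Adj (ADVertex.base (.cA' : ADBase k logk))
      (ADVertex.base .cB') := by
  rw [adGraph, SimpleGraph.fromRel_adj]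
  exact ⟨by simp, Or.inl (Or.inr (Or.inr (Or.inr (Or.inr (Or.inl ⟨rfl, rfl⟩)))))⟩

/-- `dist(a i, b j) ≤ 2q + 1` whenever `i ≠ j`, via a differing bit. -/
lemma edist_a_b (k logk q : ℕ) (hq : 1 ≤ q) (hpow : k = 2 ^ logk)
    (x y : Fin k → Bool) (i j : Fin k) (hij : i ≠ j) :
    (adGraph k logk q x y).edist (ADVertex.base (.a i)) (ADVertex.base (.b j))
      ≤ ((2 * q + 1 : ℕ) : ℕ∞) := by
  -- find a differing bit below logk
  have hexists : ∃ h : ℕ, h < logk ∧ i.val.testBit h ≠ j.val.testBit h := by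
    by_contra hcon
    push_neg at hcon
    apply hij
    apply Fin.ext
    apply Nat.eq_of_testBit_eq
    intro n
    rcases Nat.lt_or_ge n logk with hn | hn
    · exact hcon n hn
    · have hi : i.val < 2 ^ n := lt_of_lt_of_le (hpow ▸ i.isLt)
        (Nat.pow_le_pow_right (by norm_num) hn)
      have hj : j.val < 2 ^ n := lt_of_lt_of_le (hpow ▸ j.isLt)
        (Nat.pow_le_pow_right (by norm_num) hn)
      rw [Nat.testBit_eq_false_of_lt hi, Nat.testBit_eq_false_of_lt hj]
  obtain ⟨hn, hlt, hne⟩ := hexists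
  set hf : Fin logk := ⟨hn, hlt⟩ with hhf
  have h1 := edistA k logk q hq x y (.aBit i hf)
  have h2 := edistB k logk q hq x y (.aBit j hf)
  rw [srcA, tgtA] at h1
  rw [srcB, tgtB] at h2
  rw [SimpleGraph.edist_comm] at h2
  cases hbit : i.val.testBit hn with
  | true =>
    have hbj : j.val.testBit hn = false := by
      cases hbj : j.val.testBit hn
      · rfl
      · exact absurd (hbit.trans hbj.symm) hne
    rw [show (hf.val) = hn from rfl, hbit] at h1
    rw [show (hf.val) = hn from rfl, hbj] at h2
    simp only [if_pos rfl] at h1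
    simp only [if_neg Bool.false_ne_true] at h2
    have hcross : (adGraph k logk q x y).Adj (ADVertex.base (.tA hf))
        (ADVertex.base (.fB hf)) := by
      rw [adGraph, SimpleGraph.fromRel_adj]
      exact ⟨by simp, Or.inl (Or.inr (Or.inr (Or.inr (Or.inl ⟨hf, rfl, rfl⟩))))⟩
    calc (adGraph k logk q x y).edist (ADVertex.base (.a i)) (ADVertex.base (.b j))
        ≤ _ + _ := SimpleGraph.edist_triangle (v := ADVertex.base (.tA hf))
      _ ≤ (q : ℕ∞) + ((adGraph k logk q x y).edist (ADVertex.base (.tA hf))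
            (ADVertex.base (.b j))) := add_le_add h1 le_rfl
      _ ≤ (q : ℕ∞) + (_ + _) := add_le_add le_rfl
            (SimpleGraph.edist_triangle (v := ADVertex.base (.fB hf)))
      _ ≤ (q : ℕ∞) + ((1 : ℕ∞) + (q : ℕ∞)) := add_le_add le_rfl
            (add_le_add (SimpleGraph.edist_eq_one_iff_adj.mpr hcross).le h2)
      _ = ((2 * q + 1 : ℕ) : ℕ∞) := by push_cast; ring
  | false =>
    have hbj : j.val.testBit hn = true := by
      cases hbj : j.val.testBit hn
      · exact absurd (hbit.trans hbj.symm) hne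
      · rfl
    rw [show (hf.val) = hn from rfl, hbit] at h1
    rw [show (hf.val) = hn from rfl, hbj] at h2
    simp only [if_neg Bool.false_ne_true] at h1
    simp only [if_pos rfl] at h2
    have hcross : (adGraph k logk q x y).Adj (ADVertex.base (.fA hf))
        (ADVertex.base (.tB hf)) := by
      rw [adGraph, SimpleGraph.fromRel_adj]
      exact ⟨by simp, Or.inl (Or.inr (Or.inr (Or.inl ⟨hf, rfl, rfl⟩)))⟩
    calc (adGraph k logk q x y).edist (ADVertex.base (.a i)) (ADVertex.base (.b j))
        ≤ _ + _ := SimpleGraph.edist_triangle (v := ADVertex.base (.fA hf))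
      _ ≤ (q : ℕ∞) + ((adGraph k logk q x y).edist (ADVertex.base (.fA hf))
            (ADVertex.base (.b j))) := add_le_add h1 le_rfl
      _ ≤ (q : ℕ∞) + (_ + _) := add_le_add le_rfl
            (SimpleGraph.edist_triangle (v := ADVertex.base (.tB hf)))
      _ ≤ (q : ℕ∞) + ((1 : ℕ∞) + (q : ℕ∞)) := add_le_add le_rfl
            (add_le_add (SimpleGraph.edist_eq_one_iff_adj.mpr hcross).le h2)
      _ = ((2 * q + 1 : ℕ) : ℕ∞) := by push_cast; ring

/-- in the approximate-diameter lower-bound graph `G_{x,y}`, for all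
nodes `u, v ∈ A ∪ B ∪ {c̄_A, c̄_B}`, if there is no index `i` with
`{u, v} = {a i, b i}`, then `dist(u, v) ≤ 2q + 1`. -/
theorem adGraph_hub_dist_le (k logk q : ℕ) (hk : 2 ≤ k) (hpow : k = 2 ^ logk)
    (hq : 1 ≤ q) (x y : Fin k → Bool) (u v : ADVertex k logk q)
    (hu : IsHub k logk q u) (hv : IsHub k logk q v)
    (h : ¬ ∃ i : Fin k,
      (u = ADVertex.base (.a i) ∧ v = ADVertex.base (.b i)) ∨
      (u = ADVertex.base (.b i) ∧ v = ADVertex.base (.a i))) :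
    (adGraph k logk q x y).edist u v ≤ (2 * q + 1 : ℕ) := by
  have hlog : 0 < logk := by
    rcases Nat.eq_zero_or_pos logk with h0 | h0
    · subst h0; simp at hpow; omega
    · exact h0
  set hf : Fin logk := ⟨0, hlog⟩ with hhf
  set G := adGraph k logk q x y with hG
  have hmono : ((2 * q : ℕ) : ℕ∞) ≤ ((2 * q + 1 : ℕ) : ℕ∞) := Nat.cast_le.mpr (by omega)
  have hone : ((1 : ℕ) : ℕ∞) ≤ ((2 * q + 1 : ℕ) : ℕ∞) := Nat.cast_le.mpr (by omega)
  have hcc : G.edist (ADVertex.base .cA') (ADVertex.base .cB') ≤ (1 : ℕ∞) :=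
    (SimpleGraph.edist_eq_one_iff_adj.mpr (adj_cA'_cB' k logk q x y)).le
  have haC' : ∀ i : Fin k, G.edist (ADVertex.base (.a i)) (ADVertex.base .cA')
      ≤ ((2 * q : ℕ) : ℕ∞) := fun i => edist_a_cA' k logk q hq x y i hf
  have hbC' : ∀ i : Fin k, G.edist (ADVertex.base (.b i)) (ADVertex.base .cB')
      ≤ ((2 * q : ℕ) : ℕ∞) := fun i => edist_b_cB' k logk q hq x y i hf
  have haCB : ∀ i : Fin k, G.edist (ADVertex.base (.a i)) (ADVertex.base .cB')
      ≤ ((2 * q + 1 : ℕ) : ℕ∞) := by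
    intro i
    calc G.edist (ADVertex.base (.a i)) (ADVertex.base .cB')
        ≤ _ + _ := SimpleGraph.edist_triangle (v := ADVertex.base .cA')
      _ ≤ ((2 * q : ℕ) : ℕ∞) + 1 := add_le_add (haC' i) hcc
      _ = ((2 * q + 1 : ℕ) : ℕ∞) := by push_cast; ring
  have hbCA : ∀ i : Fin k, G.edist (ADVertex.base (.b i)) (ADVertex.base .cA')
      ≤ ((2 * q + 1 : ℕ) : ℕ∞) := by
    intro i
    calc G.edist (ADVertex.base (.b i)) (ADVertex.base .cA')
        ≤ _ + _ := SimpleGraph.edist_triangle (v := ADVertex.base .cB')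
      _ ≤ ((2 * q : ℕ) : ℕ∞) + 1 :=
          add_le_add (hbC' i) (by rw [SimpleGraph.edist_comm]; exact hcc)
      _ = ((2 * q + 1 : ℕ) : ℕ∞) := by push_cast; ring
  rcases hu with ⟨i, rfl⟩ | ⟨i, rfl⟩ | rfl | rfl <;>
    rcases hv with ⟨j, rfl⟩ | ⟨j, rfl⟩ | rfl | rfl
  · exact le_trans (edist_a_a k logk q hq x y i j) hmono
  · -- a i vs b j : i ≠ j
    have hij : i ≠ j := by rintro rfl; exact h ⟨i, Or.inl ⟨rfl, rfl⟩⟩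
    exact edist_a_b k logk q hq hpow x y i j hij
  · exact le_trans (haC' i) hmono
  · exact haCB i
  · -- b i vs a j
    have hij : j ≠ i := by rintro rfl; exact h ⟨_, Or.inr ⟨rfl, rfl⟩⟩
    rw [SimpleGraph.edist_comm]
    exact edist_a_b k logk q hq hpow x y j i hij
  · exact le_trans (edist_b_b k logk q hq x y i j) hmono
  · exact hbCA i
  · exact le_trans (hbC' i) hmono
  · rw [SimpleGraph.edist_comm]; exact le_trans (haC' j) hmono
  · rw [SimpleGraph.edist_comm]; exact hbCA j
  · simp [SimpleGraph.edist_self]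
  · exact le_trans hcc (by exact_mod_cast hone)
  · rw [SimpleGraph.edist_comm]; exact haCB j
  · rw [SimpleGraph.edist_comm]; exact le_trans (hbC' j) hmono
  · rw [SimpleGraph.edist_comm]
    exact le_trans hcc (by exact_mod_cast hone)
  · simp [SimpleGraph.edist_self]
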